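/- Let V be a right-right Yetter–Drinfeld module over H, where the antipode S of H is bijective. Then θ_V is bijective with inverse given by ψ(v) = v₍₀₎ ◁ S⁻²(v₍₁₎): one has θ_V(ψ(v)) = v and ψ(θ_V(v)) = v for all v ∈ V. -/

import Mathlib

open TensorProduct LinearMap HopfAlgebra Coalgebra

set_option maxHeartbeats 4000000
set_option synthInstance.maxHeartbeats 200000


section ConvGeneric

variable {k : Type*} [CommRing k] {H : Type*} [Ring H] [HopfAlgebra k H]
variable {C : Type*} [AddCommGroup C] [Module k C]

/-- Convolution product on `C →ₗ[k] H` with respect to a comultiplication `Δc`. -/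
noncomputable def convP (Δc : C →ₗ[k] C ⊗[k] C) (f g : C →ₗ[k] H) : C →ₗ[k] H :=
  LinearMap.mul' k H ∘ₗ TensorProduct.map f g ∘ₗ Δc

lemma convP_apply (Δc : C →ₗ[k] C ⊗[k] C) (f g : C →ₗ[k] H) (c : C) :
    convP Δc f g c = LinearMap.mul' k H (TensorProduct.map f g (Δc c)) := rfl

lemma convP_unit_left (Δc : C →ₗ[k] C ⊗[k] C) (εc : C →ₗ[k] k)
    (hU1 : ∀ c : C, LinearMap.rTensor C εc (Δc c) = (1 : k) ⊗ₜ[k] c)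
    (f : C →ₗ[k] H) :
    convP Δc ((Algebra.linearMap k H) ∘ₗ εc) f = f := by
  ext c
  have h1 : ∀ y : C ⊗[k] C, TensorProduct.map ((Algebra.linearMap k H) ∘ₗ εc) f y
      = TensorProduct.map (Algebra.linearMap k H) f (LinearMap.rTensor C εc y) := by
    intro y
    induction y using TensorProduct.induction_on with
    | zero => simp
    | tmul c1 c2 => simp
    | add u w hu hw => simp only [map_add, hu, hw]
  simp [convP_apply, h1, hU1 c]

lemma convP_unit_right (Δc : C →ₗ[k] C ⊗[k] C) (εc : C →ₗ[k] k)
    (hU2 : ∀ c : C, LinearMap.lTensor C εc (Δc c) = c ⊗ₜ[k] (1 : k))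
    (f : C →ₗ[k] H) :
    convP Δc f ((Algebra.linearMap k H) ∘ₗ εc) = f := by
  ext c
  have h1 : ∀ y : C ⊗[k] C, TensorProduct.map f ((Algebra.linearMap k H) ∘ₗ εc) y
      = TensorProduct.map f (Algebra.linearMap k H) (LinearMap.lTensor C εc y) := by
    intro y
    induction y using TensorProduct.induction_on with
    | zero => simp
    | tmul c1 c2 => simp
    | add u w hu hw => simp only [map_add, hu, hw]
  simp [convP_apply, h1, hU2 c]

lemma convP_assoc (Δc : C →ₗ[k] C ⊗[k] C)
    (hA : ∀ c : C, LinearMap.rTensor C Δc (Δc c)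
      = (TensorProduct.assoc k C C C).symm (LinearMap.lTensor C Δc (Δc c)))
    (f g h : C →ₗ[k] H) :
    convP Δc (convP Δc f g) h = convP Δc f (convP Δc g h) := by
  ext c
  have claim1 : ∀ y : C ⊗[k] C,
      TensorProduct.map (convP Δc f g) h y
        = TensorProduct.map (LinearMap.mul' k H) h
            (LinearMap.rTensor C (TensorProduct.map f g) (LinearMap.rTensor C Δc y)) := by
    intro y
    induction y using TensorProduct.induction_on with
    | zero => simp
    | tmul c1 c2 => simp [convP_apply]
    | add u w hu hw => simp [map_add, hu, hw]
  have claim1' : ∀ y : C ⊗[k] C,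
      TensorProduct.map f (convP Δc g h) y
        = TensorProduct.map f (LinearMap.mul' k H)
            (LinearMap.lTensor C (TensorProduct.map g h) (LinearMap.lTensor C Δc y)) := by
    intro y
    induction y using TensorProduct.induction_on with
    | zero => simp
    | tmul c1 c2 => simp [convP_apply]
    | add u w hu hw => simp [map_add, hu, hw]
  have claim2 : ∀ z : C ⊗[k] (C ⊗[k] C),
      LinearMap.mul' k H (TensorProduct.map (LinearMap.mul' k H) h
        (LinearMap.rTensor C (TensorProduct.map f g) ((TensorProduct.assoc k C C C).symm z)))
      = LinearMap.mul' k H (TensorProduct.map f (LinearMap.mul' k H)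
          (LinearMap.lTensor C (TensorProduct.map g h) z)) := by
    intro z
    induction z using TensorProduct.induction_on with
    | zero => simp
    | tmul c1 y =>
      induction y using TensorProduct.induction_on with
      | zero => simp
      | tmul c2 c3 => simp [mul_assoc]
      | add u w hu hw => simp only [tmul_add, map_add, hu, hw]
    | add u w hu hw => simp only [map_add, hu, hw]
  calc convP Δc (convP Δc f g) h c
      = LinearMap.mul' k H (TensorProduct.map (LinearMap.mul' k H) h
          (LinearMap.rTensor C (TensorProduct.map f g) (LinearMap.rTensor C Δc (Δc c)))) := by
        rw [convP_apply, claim1]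
    _ = LinearMap.mul' k H (TensorProduct.map (LinearMap.mul' k H) h
          (LinearMap.rTensor C (TensorProduct.map f g)
            ((TensorProduct.assoc k C C C).symm (LinearMap.lTensor C Δc (Δc c))))) := by
        rw [hA c]
    _ = convP Δc f (convP Δc g h) c := by
        rw [claim2, convP_apply, claim1']

end ConvGeneric




section ConvGeneric
variable {k : Type*} [CommRing k] {H : Type*} [Ring H] [HopfAlgebra k H]

/-- comultiplication on `H ⊗ H` -/
noncomputable def Dtwo : H ⊗[k] H →ₗ[k] (H ⊗[k] H) ⊗[k] (H ⊗[k] H) :=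
  (TensorProduct.tensorTensorTensorComm k H H H H).toLinearMap
    ∘ₗ TensorProduct.map Coalgebra.comul Coalgebra.comul

/-- counit on `H ⊗ H` -/
noncomputable def Etwo : H ⊗[k] H →ₗ[k] k :=
  LinearMap.mul' k k ∘ₗ TensorProduct.map Coalgebra.counit Coalgebra.counit

lemma Dtwo_tmul (a b : H) :
    Dtwo (k := k) (a ⊗ₜ[k] b)
      = (TensorProduct.tensorTensorTensorComm k H H H H)
          (Coalgebra.comul a ⊗ₜ[k] Coalgebra.comul b) := rfl

lemma Etwo_tmul (a b : H) :
    Etwo (k := k) (a ⊗ₜ[k] b) = Coalgebra.counit a * Coalgebra.counit b := rfl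

lemma Dtwo_U1 : ∀ c : H ⊗[k] H,
    LinearMap.rTensor (H ⊗[k] H) (Etwo (k := k)) (Dtwo c) = (1 : k) ⊗ₜ[k] c := by
  have N1 : ∀ u w : H ⊗[k] H,
      LinearMap.rTensor (H ⊗[k] H) (Etwo (k := k))
        ((TensorProduct.tensorTensorTensorComm k H H H H) (u ⊗ₜ[k] w))
      = (TensorProduct.map (LinearMap.mul' k k) LinearMap.id)
          ((TensorProduct.tensorTensorTensorComm k k H k H)
            ((LinearMap.rTensor H Coalgebra.counit u) ⊗ₜ[k]
             (LinearMap.rTensor H Coalgebra.counit w))) := by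
    intro u w
    induction u using TensorProduct.induction_on with
    | zero => simp
    | tmul x y =>
      induction w using TensorProduct.induction_on with
      | zero => simp
      | tmul z w' => simp [Etwo_tmul]
      | add p q hp hq => simp only [tmul_add, add_tmul, map_add, hp, hq]
    | add p q hp hq => simp only [tmul_add, add_tmul, map_add, hp, hq]
  intro c
  induction c using TensorProduct.induction_on with
  | zero => simp
  | tmul a b =>
    rw [Dtwo_tmul, N1, Coalgebra.rTensor_counit_comul, Coalgebra.rTensor_counit_comul]
    simp
  | add p q hp hq => rw [map_add, map_add, hp, hq, tmul_add]

lemma Dtwo_U2 : ∀ c : H ⊗[k] H,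
    LinearMap.lTensor (H ⊗[k] H) (Etwo (k := k)) (Dtwo c) = c ⊗ₜ[k] (1 : k) := by
  have N1 : ∀ u w : H ⊗[k] H,
      LinearMap.lTensor (H ⊗[k] H) (Etwo (k := k))
        ((TensorProduct.tensorTensorTensorComm k H H H H) (u ⊗ₜ[k] w))
      = (TensorProduct.map LinearMap.id (LinearMap.mul' k k))
          ((TensorProduct.tensorTensorTensorComm k H k H k)
            ((LinearMap.lTensor H Coalgebra.counit u) ⊗ₜ[k]
             (LinearMap.lTensor H Coalgebra.counit w))) := by
    intro u w
    induction u using TensorProduct.induction_on with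
    | zero => simp
    | tmul x y =>
      induction w using TensorProduct.induction_on with
      | zero => simp
      | tmul z w' => simp [Etwo_tmul]
      | add p q hp hq => simp only [tmul_add, add_tmul, map_add, hp, hq]
    | add p q hp hq => simp only [tmul_add, add_tmul, map_add, hp, hq]
  intro c
  induction c using TensorProduct.induction_on with
  | zero => simp
  | tmul a b =>
    rw [Dtwo_tmul, N1, Coalgebra.lTensor_counit_comul, Coalgebra.lTensor_counit_comul]
    simp
  | add p q hp hq => rw [map_add, map_add, hp, hq, add_tmul]

/-- structural rearrangement map for coassociativity of `Dtwo` -/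
noncomputable def Phi : ((H ⊗[k] H) ⊗[k] H) ⊗[k] ((H ⊗[k] H) ⊗[k] H) →ₗ[k]
    ((H ⊗[k] H) ⊗[k] (H ⊗[k] H)) ⊗[k] (H ⊗[k] H) :=
  LinearMap.rTensor (H ⊗[k] H) (TensorProduct.tensorTensorTensorComm k H H H H).toLinearMap
    ∘ₗ (TensorProduct.tensorTensorTensorComm k (H ⊗[k] H) H (H ⊗[k] H) H).toLinearMap

lemma Dtwo_coassoc : ∀ c : H ⊗[k] H,
    LinearMap.rTensor (H ⊗[k] H) (Dtwo (k := k)) (Dtwo c)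
      = (TensorProduct.assoc k (H ⊗[k] H) (H ⊗[k] H) (H ⊗[k] H)).symm
          (LinearMap.lTensor (H ⊗[k] H) (Dtwo (k := k)) (Dtwo c)) := by
  have N2' : ∀ (p q : H ⊗[k] H) (y w' : H),
      ((TensorProduct.tensorTensorTensorComm k H H H H) (p ⊗ₜ[k] q)) ⊗ₜ[k] (y ⊗ₜ[k] w')
        = Phi (k := k) ((p ⊗ₜ[k] y) ⊗ₜ[k] (q ⊗ₜ[k] w')) := by
    intro p q y w'
    induction p using TensorProduct.induction_on with
    | zero => simp [Phi]
    | tmul x1 x2 =>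
      induction q using TensorProduct.induction_on with
      | zero => simp [Phi]
      | tmul z1 z2 => simp [Phi]
      | add p' q' hp hq => simp only [tmul_add, add_tmul, map_add, hp, hq]
    | add p' q' hp hq => simp only [tmul_add, add_tmul, map_add, hp, hq]
  have N2 : ∀ u w : H ⊗[k] H,
      LinearMap.rTensor (H ⊗[k] H) (Dtwo (k := k))
        ((TensorProduct.tensorTensorTensorComm k H H H H) (u ⊗ₜ[k] w))
      = Phi (k := k) ((LinearMap.rTensor H Coalgebra.comul u) ⊗ₜ[k]
          (LinearMap.rTensor H Coalgebra.comul w)) := by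
    intro u w
    induction u using TensorProduct.induction_on with
    | zero => simp
    | tmul x y =>
      induction w using TensorProduct.induction_on with
      | zero => simp
      | tmul z w' => rw [tensorTensorTensorComm_tmul]; simp only [rTensor_tmul, Dtwo_tmul]
                     exact N2' _ _ y w'
      | add p q hp hq => simp only [tmul_add, add_tmul, map_add, hp, hq]
    | add p q hp hq => simp only [tmul_add, add_tmul, map_add, hp, hq]
  have N3' : ∀ (x z : H) (p q : H ⊗[k] H),
      (TensorProduct.assoc k (H ⊗[k] H) (H ⊗[k] H) (H ⊗[k] H)).symm
        ((x ⊗ₜ[k] z) ⊗ₜ[k] ((TensorProduct.tensorTensorTensorComm k H H H H) (p ⊗ₜ[k] q)))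
      = Phi (k := k) (((TensorProduct.assoc k H H H).symm (x ⊗ₜ[k] p)) ⊗ₜ[k]
          ((TensorProduct.assoc k H H H).symm (z ⊗ₜ[k] q))) := by
    intro x z p q
    induction p using TensorProduct.induction_on with
    | zero => simp [Phi]
    | tmul p1 p2 =>
      induction q using TensorProduct.induction_on with
      | zero => simp [Phi]
      | tmul q1 q2 => simp [Phi]
      | add p' q' hp hq => simp only [tmul_add, add_tmul, map_add, hp, hq]
    | add p' q' hp hq => simp only [tmul_add, add_tmul, map_add, hp, hq]
  have N3 : ∀ u w : H ⊗[k] H,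
      (TensorProduct.assoc k (H ⊗[k] H) (H ⊗[k] H) (H ⊗[k] H)).symm
        (LinearMap.lTensor (H ⊗[k] H) (Dtwo (k := k))
          ((TensorProduct.tensorTensorTensorComm k H H H H) (u ⊗ₜ[k] w)))
      = Phi (k := k) (((TensorProduct.assoc k H H H).symm
            (LinearMap.lTensor H Coalgebra.comul u)) ⊗ₜ[k]
          ((TensorProduct.assoc k H H H).symm (LinearMap.lTensor H Coalgebra.comul w))) := by
    intro u w
    induction u using TensorProduct.induction_on with
    | zero => simp
    | tmul x y =>
      induction w using TensorProduct.induction_on with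
      | zero => simp
      | tmul z w' => rw [tensorTensorTensorComm_tmul]; simp only [lTensor_tmul, Dtwo_tmul]
                     exact N3' x z _ _
      | add p q hp hq => simp only [tmul_add, add_tmul, map_add, hp, hq]
    | add p q hp hq => simp only [tmul_add, add_tmul, map_add, hp, hq]
  intro c
  induction c using TensorProduct.induction_on with
  | zero => simp
  | tmul a b =>
    rw [Dtwo_tmul, N2, N3]
    rw [Coalgebra.coassoc_symm_apply, Coalgebra.coassoc_symm_apply]
  | add p q hp hq => simp only [map_add, hp, hq]

end ConvGeneric




section Anti
variable {k : Type*} [CommRing k] {H : Type*} [Ring H] [HopfAlgebra k H]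

lemma my_antipode_one : HopfAlgebra.antipode (R := k) (1 : H) = 1 := by
  have := HopfAlgebra.mul_antipode_rTensor_comul_apply (R := k) (A := H) 1
  rw [Bialgebra.comul_one, Algebra.TensorProduct.one_def] at this
  simpa using this

end Anti

section AntiMul
variable {k : Type*} [CommRing k] {H : Type*} [Ring H] [HopfAlgebra k H]

lemma conv_F_T : convP (Dtwo (k := k) (H := H))
    (HopfAlgebra.antipode (R := k) ∘ₗ LinearMap.mul' k H) (LinearMap.mul' k H)
    = (Algebra.linearMap k H) ∘ₗ Etwo (k := k) := by
  have claimM : ∀ u w : H ⊗[k] H,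
      TensorProduct.map (LinearMap.mul' k H) (LinearMap.mul' k H)
        ((TensorProduct.tensorTensorTensorComm k H H H H) (u ⊗ₜ[k] w)) = u * w := by
    intro u w
    induction u using TensorProduct.induction_on with
    | zero => simp
    | tmul x y =>
      induction w using TensorProduct.induction_on with
      | zero => simp
      | tmul z w' => simp [Algebra.TensorProduct.tmul_mul_tmul]
      | add p q hp hq => simp only [tmul_add, add_tmul, map_add, hp, hq, mul_add]
    | add p q hp hq => simp only [tmul_add, add_tmul, map_add, hp, hq, add_mul]
  have claimS : ∀ y : (H ⊗[k] H) ⊗[k] (H ⊗[k] H),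
      TensorProduct.map (HopfAlgebra.antipode (R := k) ∘ₗ LinearMap.mul' k H)
          (LinearMap.mul' k H) y
      = LinearMap.rTensor H (HopfAlgebra.antipode (R := k))
          (TensorProduct.map (LinearMap.mul' k H) (LinearMap.mul' k H) y) := by
    intro y
    induction y using TensorProduct.induction_on with
    | zero => simp
    | tmul u w => simp
    | add p q hp hq => simp only [map_add, hp, hq]
  apply TensorProduct.ext'
  intro a b
  simp only [LinearMap.comp_apply, convP_apply, Dtwo_tmul, Etwo_tmul, claimS, claimM]
  rw [← Bialgebra.comul_mul, HopfAlgebra.mul_antipode_rTensor_comul_apply,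
    Bialgebra.counit_mul]
  simp [Algebra.linearMap_apply, map_mul]

/-- auxiliary map for `conv_T_G` -/
noncomputable def Yaux : (H ⊗[k] H) ⊗[k] H →ₗ[k] H :=
  LinearMap.mul' k H
    ∘ₗ LinearMap.lTensor H (LinearMap.mul' k H)
    ∘ₗ LinearMap.lTensor H (LinearMap.lTensor H (HopfAlgebra.antipode (R := k)))
    ∘ₗ LinearMap.lTensor H (TensorProduct.comm k H H).toLinearMap
    ∘ₗ (TensorProduct.assoc k H H H).toLinearMap

lemma Yaux_tmul (x y u : H) :
    Yaux (k := k) ((x ⊗ₜ[k] y) ⊗ₜ[k] u)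
      = x * (u * HopfAlgebra.antipode (R := k) y) := rfl

lemma conv_T_G : convP (Dtwo (k := k) (H := H)) (LinearMap.mul' k H)
      (LinearMap.mul' k H
        ∘ₗ TensorProduct.map (HopfAlgebra.antipode (R := k)) (HopfAlgebra.antipode (R := k))
        ∘ₗ (TensorProduct.comm k H H).toLinearMap)
    = (Algebra.linearMap k H) ∘ₗ Etwo (k := k) := by
  set G : H ⊗[k] H →ₗ[k] H := LinearMap.mul' k H
        ∘ₗ TensorProduct.map (HopfAlgebra.antipode (R := k)) (HopfAlgebra.antipode (R := k))
        ∘ₗ (TensorProduct.comm k H H).toLinearMap with hG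
  have claimY : ∀ u w : H ⊗[k] H,
      LinearMap.mul' k H (TensorProduct.map (LinearMap.mul' k H) G
          ((TensorProduct.tensorTensorTensorComm k H H H H) (u ⊗ₜ[k] w)))
      = Yaux (k := k) (u ⊗ₜ[k]
          (LinearMap.mul' k H (LinearMap.lTensor H (HopfAlgebra.antipode (R := k)) w))) := by
    intro u w
    induction u using TensorProduct.induction_on with
    | zero => simp
    | tmul x y =>
      induction w using TensorProduct.induction_on with
      | zero => simp
      | tmul z w' =>
        simp only [tensorTensorTensorComm_tmul, map_tmul, mul'_apply, lTensor_tmul,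
          Yaux_tmul, hG, LinearMap.comp_apply, LinearEquiv.coe_coe, comm_tmul]
        simp [mul_assoc]
      | add p q hp hq => simp only [tmul_add, add_tmul, map_add, hp, hq]
    | add p q hp hq => simp only [tmul_add, add_tmul, map_add, hp, hq]
  have claimY1 : ∀ u : H ⊗[k] H,
      Yaux (k := k) (u ⊗ₜ[k] (1 : H))
        = LinearMap.mul' k H (LinearMap.lTensor H (HopfAlgebra.antipode (R := k)) u) := by
    intro u
    induction u using TensorProduct.induction_on with
    | zero => simp
    | tmul x y => simp [Yaux_tmul]
    | add p q hp hq => simp only [add_tmul, map_add, hp, hq]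
  apply TensorProduct.ext'
  intro a b
  simp only [LinearMap.comp_apply, convP_apply, Dtwo_tmul, Etwo_tmul]
  rw [claimY, HopfAlgebra.mul_antipode_lTensor_comul_apply]
  rw [Algebra.linearMap_apply, Algebra.algebraMap_eq_smul_one, tmul_smul, map_smul,
    claimY1, HopfAlgebra.mul_antipode_lTensor_comul_apply]
  rw [Algebra.smul_def, map_mul, Algebra.commutes]

attribute [irreducible] convP Dtwo Etwo Phi Yaux

lemma antipode_comp_mul :
    (HopfAlgebra.antipode (R := k) ∘ₗ LinearMap.mul' k H)
      = (LinearMap.mul' k H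
        ∘ₗ TensorProduct.map (HopfAlgebra.antipode (R := k)) (HopfAlgebra.antipode (R := k))
        ∘ₗ (TensorProduct.comm k H H).toLinearMap) := by
  have h1 := convP_unit_right (Dtwo (k := k) (H := H)) (Etwo (k := k)) Dtwo_U2
    (HopfAlgebra.antipode (R := k) ∘ₗ LinearMap.mul' k H)
  have h2 := convP_unit_left (Dtwo (k := k) (H := H)) (Etwo (k := k)) Dtwo_U1
    (LinearMap.mul' k H
        ∘ₗ TensorProduct.map (HopfAlgebra.antipode (R := k)) (HopfAlgebra.antipode (R := k))
        ∘ₗ (TensorProduct.comm k H H).toLinearMap)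
  have step1 := convP_assoc (Dtwo (k := k) (H := H)) Dtwo_coassoc
    (HopfAlgebra.antipode (R := k) ∘ₗ LinearMap.mul' k H) (LinearMap.mul' k H)
    (LinearMap.mul' k H
        ∘ₗ TensorProduct.map (HopfAlgebra.antipode (R := k)) (HopfAlgebra.antipode (R := k))
        ∘ₗ (TensorProduct.comm k H H).toLinearMap)
  rw [conv_F_T] at step1
  rw [conv_T_G] at step1
  rw [h1] at step1
  rw [h2] at step1
  exact step1.symm

lemma my_antipode_mul (a b : H) :
    HopfAlgebra.antipode (R := k) (a * b)
      = HopfAlgebra.antipode (R := k) b * HopfAlgebra.antipode (R := k) a := by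
  have := LinearMap.congr_fun (antipode_comp_mul (k := k) (H := H)) (a ⊗ₜ[k] b)
  simpa using this

end AntiMul

section Main

variable {k : Type*} [CommRing k] {H : Type*} [Ring H] [HopfAlgebra k H]
variable {V : Type*} [AddCommGroup V] [Module k V]

/-- `mu3 (x ⊗ (a ⊗ c)) = a * x * c` -/
noncomputable def mu3 : H ⊗[k] (H ⊗[k] H) →ₗ[k] H :=
  LinearMap.mul' k H
    ∘ₗ LinearMap.rTensor H (LinearMap.mul' k H)
    ∘ₗ LinearMap.rTensor H (TensorProduct.comm k H H).toLinearMap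
    ∘ₗ (TensorProduct.assoc k H H H).symm.toLinearMap

/-- `Pmap (a ⊗ (b ⊗ c)) = b ⊗ (S a ⊗ c)` -/
noncomputable def Pmap : H ⊗[k] (H ⊗[k] H) →ₗ[k] H ⊗[k] (H ⊗[k] H) :=
  (TensorProduct.assoc k H H H).toLinearMap
    ∘ₗ LinearMap.rTensor H (TensorProduct.comm k H H).toLinearMap
    ∘ₗ (TensorProduct.assoc k H H H).symm.toLinearMap
    ∘ₗ LinearMap.rTensor (H ⊗[k] H) (HopfAlgebra.antipode (R := k))

/-- The Yetter–Drinfeld right-hand side as a single linear map. -/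
noncomputable def YDmap (actV : V →ₗ[k] H →ₗ[k] V) :
    (V ⊗[k] H) ⊗[k] (H ⊗[k] (H ⊗[k] H)) →ₗ[k] V ⊗[k] H :=
  (TensorProduct.map (TensorProduct.lift actV) (mu3 (k := k)))
    ∘ₗ (TensorProduct.tensorTensorTensorComm k V H H (H ⊗[k] H)).toLinearMap
    ∘ₗ (LinearMap.lTensor (V ⊗[k] H) (Pmap (k := k)))

lemma YDmap_tmul (actV : V →ₗ[k] H →ₗ[k] V) (w : V) (x a b c : H) :
    YDmap actV ((w ⊗ₜ[k] x) ⊗ₜ[k] (a ⊗ₜ[k] (b ⊗ₜ[k] c)))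
      = (actV w b) ⊗ₜ[k] (HopfAlgebra.antipode (R := k) a * x * c) := by
  simp [YDmap, mu3, Pmap, mul_assoc]

/-- `Skel ((w ⊗ p) ⊗ (q ⊗ r)) = actV w (q * (p * r))` -/
noncomputable def Skel (actV : V →ₗ[k] H →ₗ[k] V) :
    (V ⊗[k] H) ⊗[k] (H ⊗[k] H) →ₗ[k] V :=
  TensorProduct.lift actV
    ∘ₗ LinearMap.lTensor V (LinearMap.mul' k H)
    ∘ₗ (TensorProduct.assoc k V H H).toLinearMap
    ∘ₗ TensorProduct.map LinearMap.id (LinearMap.mul' k H)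
    ∘ₗ (TensorProduct.tensorTensorTensorComm k V H H H).toLinearMap

lemma Skel_tmul (actV : V →ₗ[k] H →ₗ[k] V) (w : V) (p q r : H) :
    Skel actV ((w ⊗ₜ[k] p) ⊗ₜ[k] (q ⊗ₜ[k] r)) = actV w (q * (p * r)) := by
  simp [Skel]

noncomputable def Ftil (actV : V →ₗ[k] H →ₗ[k] V) :
    (V ⊗[k] H) ⊗[k] (H ⊗[k] H) →ₗ[k] V :=
  Skel actV ∘ₗ TensorProduct.map
    (LinearMap.lTensor V (HopfAlgebra.antipode (R := k)))
    ((LinearMap.lTensor H (HopfAlgebra.antipode (R := k) ∘ₗ HopfAlgebra.antipode (R := k)))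
      ∘ₗ (TensorProduct.comm k H H).toLinearMap)

lemma Ftil_tmul (actV : V →ₗ[k] H →ₗ[k] V) (w : V) (x a e : H) :
    Ftil actV ((w ⊗ₜ[k] x) ⊗ₜ[k] (a ⊗ₜ[k] e))
      = actV w (e * (HopfAlgebra.antipode (R := k) x *
          HopfAlgebra.antipode (R := k) (HopfAlgebra.antipode (R := k) a))) := by
  simp [Ftil, Skel_tmul]

noncomputable def Gtil (actV : V →ₗ[k] H →ₗ[k] V) (Sinv : H →ₗ[k] H) :
    (V ⊗[k] H) ⊗[k] (H ⊗[k] H) →ₗ[k] V :=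
  Skel actV ∘ₗ TensorProduct.map
    (LinearMap.lTensor V (Sinv ∘ₗ Sinv))
    (LinearMap.lTensor H (Sinv ∘ₗ Sinv))

lemma Gtil_tmul (actV : V →ₗ[k] H →ₗ[k] V) (Sinv : H →ₗ[k] H) (w : V) (x g c : H) :
    Gtil actV Sinv ((w ⊗ₜ[k] x) ⊗ₜ[k] (g ⊗ₜ[k] c))
      = actV w (g * (Sinv (Sinv x) * Sinv (Sinv c))) := by
  simp [Gtil, Skel_tmul]

end Main


theorem stmt_17
    {k : Type*} [CommRing k] {H : Type*} [Ring H] [HopfAlgebra k H]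
    -- the antipode is bijective, with (linear) inverse `Sinv`:
    (Sinv : H →ₗ[k] H)
    (hSinv1 : ∀ h : H, Sinv (HopfAlgebra.antipode (R := k) h) = h)
    (hSinv2 : ∀ h : H, HopfAlgebra.antipode (R := k) (Sinv h) = h)
    {V : Type*} [AddCommGroup V] [Module k V]
    -- the right `H`-action `(v, h) ↦ v ◁ h` as a bilinear map:
    (actV : V →ₗ[k] H →ₗ[k] V)
    (hactV1 : ∀ v : V, actV v 1 = v)
    (hactVmul : ∀ (v : V) (g h : H), actV v (g * h) = actV (actV v g) h)
    -- the right `H`-coaction, coassociative and counital: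
    (ρV : V →ₗ[k] V ⊗[k] H)
    (hcoassocV : ∀ v : V,
      (TensorProduct.map ρV LinearMap.id) (ρV v)
        = (TensorProduct.assoc k V H H).symm
            ((TensorProduct.map LinearMap.id Coalgebra.comul) (ρV v)))
    (hcounitV : ∀ v : V,
      (TensorProduct.rid k V)
        ((TensorProduct.map LinearMap.id Coalgebra.counit) (ρV v)) = v)
    -- the Yetter–Drinfeld condition `ρ(v ◁ h) = v₍₀₎ ◁ h₍₂₎ ⊗ S(h₍₁₎)·v₍₁₎·h₍₃₎`:
    (hYDV : ∀ (v : V) (h : H),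
      ρV (actV v h)
        = (TensorProduct.map (TensorProduct.lift actV)
            (LinearMap.mul' k H
              ∘ₗ LinearMap.rTensor H (LinearMap.mul' k H)
              ∘ₗ LinearMap.rTensor H (TensorProduct.comm k H H).toLinearMap
              ∘ₗ (TensorProduct.assoc k H H H).symm.toLinearMap))
          ((TensorProduct.tensorTensorTensorComm k V H H (H ⊗[k] H))
            ((ρV v) ⊗ₜ[k]
              (((TensorProduct.assoc k H H H).toLinearMap
                ∘ₗ LinearMap.rTensor H (TensorProduct.comm k H H).toLinearMap
                ∘ₗ (TensorProduct.assoc k H H H).symm.toLinearMap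
                ∘ₗ LinearMap.rTensor (H ⊗[k] H) (HopfAlgebra.antipode (R := k))
                ∘ₗ LinearMap.lTensor H Coalgebra.comul
                ∘ₗ Coalgebra.comul) h))))
    -- `θ_V(v) = v₍₀₎ ◁ S(v₍₁₎)`:
    (θV : V →ₗ[k] V)
    (hθV : θV = TensorProduct.lift actV
        ∘ₗ LinearMap.lTensor V (HopfAlgebra.antipode (R := k)) ∘ₗ ρV)
    -- `ψ(v) = v₍₀₎ ◁ S⁻²(v₍₁₎)`:
    (ψ : V →ₗ[k] V)
    (hψ : ψ = TensorProduct.lift actV ∘ₗ LinearMap.lTensor V (Sinv ∘ₗ Sinv) ∘ₗ ρV) :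
    ∀ v : V, θV (ψ v) = v ∧ ψ (θV v) = v := by
  -- abbreviations used only in `have` statements
  have Sone : HopfAlgebra.antipode (R := k) (1 : H) = 1 := my_antipode_one
  have hSinv_one : Sinv (1 : H) = 1 := by
    have h := hSinv1 1; rwa [Sone] at h
  have hSinv_mul : ∀ a b : H, Sinv (a * b) = Sinv b * Sinv a := by
    intro a b
    have h := hSinv1 (Sinv b * Sinv a)
    rwa [my_antipode_mul, hSinv2, hSinv2] at h
  have hSinv_alg : ∀ r : k, Sinv (algebraMap k H r) = algebraMap k H r := by
    intro r
    rw [Algebra.algebraMap_eq_smul_one, map_smul, hSinv_one]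
  -- tensor helpers
  have comm_lT : ∀ (f : H →ₗ[k] H) (y : H ⊗[k] H),
      (TensorProduct.comm k H H) (LinearMap.lTensor H f y)
        = LinearMap.rTensor H f ((TensorProduct.comm k H H) y) := by
    intro f y
    induction y using TensorProduct.induction_on with
    | zero => simp
    | tmul a b => simp
    | add p q hp hq => simp [map_add, hp, hq]
  have comm_comm : ∀ y : H ⊗[k] H,
      (TensorProduct.comm k H H) ((TensorProduct.comm k H H) y) = y := by
    intro y
    induction y using TensorProduct.induction_on with
    | zero => simp
    | tmul a b => simp
    | add p q hp hq => simp [map_add, hp, hq]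
  have sinv_mul' : ∀ y : H ⊗[k] H,
      Sinv (LinearMap.mul' k H y)
        = LinearMap.mul' k H
            (TensorProduct.map Sinv Sinv ((TensorProduct.comm k H H) y)) := by
    intro y
    induction y using TensorProduct.induction_on with
    | zero => simp
    | tmul a b => simp [hSinv_mul]
    | add p q hp hq => simp [map_add, hp, hq]
  have mapSS_rT_S : ∀ y : H ⊗[k] H,
      TensorProduct.map Sinv Sinv
          (LinearMap.rTensor H (HopfAlgebra.antipode (R := k)) y)
        = LinearMap.lTensor H Sinv y := by
    intro y
    induction y using TensorProduct.induction_on with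
    | zero => simp
    | tmul a b => simp [hSinv1]
    | add p q hp hq => simp [map_add, hp, hq]
  have mapSS_rT_Sinv : ∀ y : H ⊗[k] H,
      TensorProduct.map Sinv Sinv (LinearMap.rTensor H Sinv y)
        = TensorProduct.map (Sinv ∘ₗ Sinv) Sinv y := by
    intro y
    induction y using TensorProduct.induction_on with
    | zero => simp
    | tmul a b => simp
    | add p q hp hq => simp [map_add, hp, hq]
  have q_elem : ∀ x : H,
      LinearMap.mul' k H (LinearMap.lTensor H Sinv
          ((TensorProduct.comm k H H) (Coalgebra.comul x)))
        = algebraMap k H (Coalgebra.counit x) := by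
    intro x
    have h1 : Sinv (LinearMap.mul' k H
        (LinearMap.lTensor H (HopfAlgebra.antipode (R := k)) (Coalgebra.comul x)))
        = algebraMap k H (Coalgebra.counit x) := by
      rw [HopfAlgebra.mul_antipode_lTensor_comul_apply]
      exact hSinv_alg _
    rw [sinv_mul', comm_lT, mapSS_rT_S] at h1
    exact h1
  have q2_elem : ∀ x : H,
      LinearMap.mul' k H (TensorProduct.map (Sinv ∘ₗ Sinv) Sinv (Coalgebra.comul x))
        = algebraMap k H (Coalgebra.counit x) := by
    intro x
    have h1 : Sinv (LinearMap.mul' k H (LinearMap.lTensor H Sinv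
        ((TensorProduct.comm k H H) (Coalgebra.comul x))))
        = algebraMap k H (Coalgebra.counit x) := by
      rw [q_elem x]; exact hSinv_alg _
    rw [sinv_mul', comm_lT, comm_comm, mapSS_rT_Sinv] at h1
    exact h1
  -- the YD condition in packaged form
  have hYD' : ∀ (w : V) (x : H),
      ρV (actV w x) = YDmap actV ((ρV w) ⊗ₜ[k]
        (LinearMap.lTensor H Coalgebra.comul (Coalgebra.comul x))) := by
    intro w x
    rw [hYDV w x]
    simp only [YDmap, mu3, Pmap, LinearMap.comp_apply, LinearMap.lTensor_tmul,
      LinearEquiv.coe_coe]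
  -- Lemma A : θ(v ◁ h) = θ(v) ◁ S²(h)
  have LA : ∀ (w : V) (x : H),
      θV (actV w x) = actV (θV w)
        (HopfAlgebra.antipode (R := k) (HopfAlgebra.antipode (R := k) x)) := by
    intro w x
    have keyA : ∀ (t : V ⊗[k] H) (y : H ⊗[k] (H ⊗[k] H)),
        TensorProduct.lift actV
            (LinearMap.lTensor V (HopfAlgebra.antipode (R := k))
              (YDmap actV (t ⊗ₜ[k] y)))
          = Ftil actV (t ⊗ₜ[k]
              (LinearMap.lTensor H (LinearMap.mul' k H
                ∘ₗ LinearMap.lTensor H (HopfAlgebra.antipode (R := k))) y)) := by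
      intro t y
      induction t using TensorProduct.induction_on with
      | zero => simp
      | tmul w' x' =>
        induction y using TensorProduct.induction_on with
        | zero => simp
        | tmul a u =>
          induction u using TensorProduct.induction_on with
          | zero => simp
          | tmul b c =>
            simp only [YDmap_tmul, LinearMap.lTensor_tmul, TensorProduct.lift.tmul,
              LinearMap.comp_apply, LinearMap.mul'_apply, Ftil_tmul]
            rw [my_antipode_mul, my_antipode_mul, ← hactVmul, mul_assoc]
          | add p q hp hq => simp only [TensorProduct.tmul_add, map_add, hp, hq]
        | add p q hp hq => simp only [TensorProduct.tmul_add, map_add, hp, hq]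
      | add p q hp hq => simp only [TensorProduct.add_tmul, map_add, hp, hq]
    have IdL : (LinearMap.lTensor H (LinearMap.mul' k H
          ∘ₗ LinearMap.lTensor H (HopfAlgebra.antipode (R := k))))
          (LinearMap.lTensor H Coalgebra.comul (Coalgebra.comul x))
        = x ⊗ₜ[k] (1 : H) := by
      rw [← LinearMap.lTensor_comp_apply, LinearMap.comp_assoc,
        HopfAlgebra.mul_antipode_lTensor_comul, LinearMap.lTensor_comp_apply,
        Coalgebra.lTensor_counit_comul]
      simp
    have keyA2 : ∀ t : V ⊗[k] H,
        Ftil actV (t ⊗ₜ[k] (x ⊗ₜ[k] (1 : H)))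
          = actV (TensorProduct.lift actV
              (LinearMap.lTensor V (HopfAlgebra.antipode (R := k)) t))
              (HopfAlgebra.antipode (R := k) (HopfAlgebra.antipode (R := k) x)) := by
      intro t
      induction t using TensorProduct.induction_on with
      | zero => simp
      | tmul w' x' => simp [Ftil_tmul, hactVmul]
      | add p q hp hq =>
        simp only [TensorProduct.add_tmul, map_add, hp, hq, LinearMap.add_apply]
    rw [hθV]
    simp only [LinearMap.comp_apply]
    rw [hYD' w x, keyA, IdL, keyA2]
  -- Lemma B : ψ(v ◁ h) = ψ(v) ◁ S⁻²(h)
  have LB : ∀ (w : V) (x : H),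
      ψ (actV w x) = actV (ψ w) (Sinv (Sinv x)) := by
    intro w x
    have keyB : ∀ (t : V ⊗[k] H) (y : H ⊗[k] (H ⊗[k] H)),
        TensorProduct.lift actV
            (LinearMap.lTensor V (Sinv ∘ₗ Sinv) (YDmap actV (t ⊗ₜ[k] y)))
          = Gtil actV Sinv (t ⊗ₜ[k]
              (LinearMap.rTensor H (LinearMap.mul' k H
                  ∘ₗ LinearMap.lTensor H Sinv
                  ∘ₗ (TensorProduct.comm k H H).toLinearMap)
                ((TensorProduct.assoc k H H H).symm y))) := by
      intro t y
      induction t using TensorProduct.induction_on with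
      | zero => simp
      | tmul w' x' =>
        induction y using TensorProduct.induction_on with
        | zero => simp
        | tmul a u =>
          induction u using TensorProduct.induction_on with
          | zero => simp
          | tmul b c =>
            simp only [YDmap_tmul, LinearMap.lTensor_tmul, TensorProduct.lift.tmul,
              LinearMap.comp_apply, LinearMap.mul'_apply, Gtil_tmul,
              TensorProduct.assoc_symm_tmul, LinearMap.rTensor_tmul,
              LinearEquiv.coe_coe, TensorProduct.comm_tmul]
            rw [hSinv_mul, hSinv_mul, hSinv_mul, hSinv1, hSinv_mul, ← hactVmul]
            simp [mul_assoc]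
          | add p q hp hq => simp only [TensorProduct.tmul_add, map_add, hp, hq]
        | add p q hp hq => simp only [TensorProduct.tmul_add, map_add, hp, hq]
      | add p q hp hq => simp only [TensorProduct.add_tmul, map_add, hp, hq]
    have qmap : (LinearMap.mul' k H ∘ₗ LinearMap.lTensor H Sinv
          ∘ₗ (TensorProduct.comm k H H).toLinearMap) ∘ₗ Coalgebra.comul
        = (Algebra.linearMap k H) ∘ₗ (Coalgebra.counit (R := k) (A := H)) := by
      apply LinearMap.ext
      intro x'
      simpa using q_elem x'
    have IdB : (LinearMap.rTensor H (LinearMap.mul' k H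
          ∘ₗ LinearMap.lTensor H Sinv
          ∘ₗ (TensorProduct.comm k H H).toLinearMap))
          ((TensorProduct.assoc k H H H).symm
            (LinearMap.lTensor H Coalgebra.comul (Coalgebra.comul x)))
        = (1 : H) ⊗ₜ[k] x := by
      rw [Coalgebra.coassoc_symm_apply, ← LinearMap.rTensor_comp_apply, qmap,
        LinearMap.rTensor_comp_apply, Coalgebra.rTensor_counit_comul]
      simp
    have keyB2 : ∀ t : V ⊗[k] H,
        Gtil actV Sinv (t ⊗ₜ[k] ((1 : H) ⊗ₜ[k] x))
          = actV (TensorProduct.lift actV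
              (LinearMap.lTensor V (Sinv ∘ₗ Sinv) t)) (Sinv (Sinv x)) := by
      intro t
      induction t using TensorProduct.induction_on with
      | zero => simp
      | tmul w' x' => simp [Gtil_tmul, hactVmul]
      | add p q hp hq =>
        simp only [TensorProduct.add_tmul, map_add, hp, hq, LinearMap.add_apply]
    rw [hψ]
    simp only [LinearMap.comp_apply]
    rw [hYD' w x, keyB, IdB, keyB2]
  -- map versions
  have LAmap : ∀ t : V ⊗[k] H,
      θV (TensorProduct.lift actV t)
        = TensorProduct.lift actV
            (TensorProduct.map θV
              (HopfAlgebra.antipode (R := k) ∘ₗ HopfAlgebra.antipode (R := k)) t) := by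
    intro t
    induction t using TensorProduct.induction_on with
    | zero => simp
    | tmul w' x' => simp [LA]
    | add p q hp hq => simp [map_add, hp, hq]
  have LBmap : ∀ t : V ⊗[k] H,
      ψ (TensorProduct.lift actV t)
        = TensorProduct.lift actV
            (TensorProduct.map ψ (Sinv ∘ₗ Sinv) t) := by
    intro t
    induction t using TensorProduct.induction_on with
    | zero => simp
    | tmul w' x' => simp [LB]
    | add p q hp hq => simp [map_add, hp, hq]
  -- final counit-type step
  have keyD : ∀ t : V ⊗[k] H,
      TensorProduct.lift actV
          (LinearMap.lTensor V ((Algebra.linearMap k H) ∘ₗ Coalgebra.counit) t)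
        = (TensorProduct.rid k V)
            ((TensorProduct.map LinearMap.id Coalgebra.counit) t) := by
    intro t
    induction t using TensorProduct.induction_on with
    | zero => simp
    | tmul w' x' =>
      simp [Algebra.algebraMap_eq_smul_one, hactV1]
    | add p q hp hq => simp [map_add, hp, hq]
  -- the "act after rTensor-θ-like map, via coassociativity" step
  have keyC : ∀ u : V ⊗[k] (H ⊗[k] H),
      TensorProduct.lift actV
          (LinearMap.rTensor H
            (TensorProduct.lift actV ∘ₗ LinearMap.lTensor V (HopfAlgebra.antipode (R := k)))
            ((TensorProduct.assoc k V H H).symm u))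
        = TensorProduct.lift actV
            (LinearMap.lTensor V (LinearMap.mul' k H
              ∘ₗ LinearMap.rTensor H (HopfAlgebra.antipode (R := k))) u) := by
    intro u
    induction u using TensorProduct.induction_on with
    | zero => simp
    | tmul w' y =>
      induction y using TensorProduct.induction_on with
      | zero => simp
      | tmul a b => simp [hactVmul]
      | add p q hp hq => simp only [TensorProduct.tmul_add, map_add, hp, hq]
    | add p q hp hq => simp only [TensorProduct.add_tmul, map_add, hp, hq]
  have keyC2 : ∀ u : V ⊗[k] (H ⊗[k] H),
      TensorProduct.lift actV
          (TensorProduct.map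
            (TensorProduct.lift actV ∘ₗ LinearMap.lTensor V (Sinv ∘ₗ Sinv)) Sinv
            ((TensorProduct.assoc k V H H).symm u))
        = TensorProduct.lift actV
            (LinearMap.lTensor V (LinearMap.mul' k H
              ∘ₗ TensorProduct.map (Sinv ∘ₗ Sinv) Sinv) u) := by
    intro u
    induction u using TensorProduct.induction_on with
    | zero => simp
    | tmul w' y =>
      induction y using TensorProduct.induction_on with
      | zero => simp
      | tmul a b => simp [hactVmul]
      | add p q hp hq => simp only [TensorProduct.tmul_add, map_add, hp, hq]
    | add p q hp hq => simp only [TensorProduct.add_tmul, map_add, hp, hq]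
  intro v
  constructor
  · -- θ (ψ v) = v
    rw [hψ]
    simp only [LinearMap.comp_apply]
    rw [LAmap]
    have step1 : TensorProduct.map θV
          (HopfAlgebra.antipode (R := k) ∘ₗ HopfAlgebra.antipode (R := k))
          (LinearMap.lTensor V (Sinv ∘ₗ Sinv) (ρV v))
        = LinearMap.rTensor H θV (ρV v) := by
      have : ∀ z : V ⊗[k] H, TensorProduct.map θV
          (HopfAlgebra.antipode (R := k) ∘ₗ HopfAlgebra.antipode (R := k))
          (LinearMap.lTensor V (Sinv ∘ₗ Sinv) z) = LinearMap.rTensor H θV z := by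
        intro z
        induction z using TensorProduct.induction_on with
        | zero => simp
        | tmul w' x' => simp [hSinv2]
        | add p q hp hq => simp [map_add, hp, hq]
      exact this (ρV v)
    rw [step1, hθV]
    have hco : LinearMap.rTensor H ρV (ρV v)
        = (TensorProduct.assoc k V H H).symm
            (LinearMap.lTensor V Coalgebra.comul (ρV v)) := by
      have hco0 := hcoassocV v
      have e1 : (TensorProduct.map ρV LinearMap.id) (ρV v)
          = LinearMap.rTensor H ρV (ρV v) := rfl
      have e2 : (TensorProduct.map LinearMap.id Coalgebra.comul) (ρV v)
          = LinearMap.lTensor V Coalgebra.comul (ρV v) := rfl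
      rw [e1, e2] at hco0
      exact hco0
    rw [LinearMap.rTensor_comp_apply, LinearMap.rTensor_comp_apply, hco,
      ← LinearMap.rTensor_comp_apply]
    rw [keyC, ← LinearMap.lTensor_comp_apply, LinearMap.comp_assoc,
      HopfAlgebra.mul_antipode_rTensor_comul, keyD, hcounitV]
  · -- ψ (θ v) = v
    rw [hθV]
    simp only [LinearMap.comp_apply]
    rw [LBmap]
    have step1 : TensorProduct.map ψ (Sinv ∘ₗ Sinv)
          (LinearMap.lTensor V (HopfAlgebra.antipode (R := k)) (ρV v))
        = TensorProduct.map ψ Sinv (ρV v) := by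
      have : ∀ z : V ⊗[k] H, TensorProduct.map ψ (Sinv ∘ₗ Sinv)
          (LinearMap.lTensor V (HopfAlgebra.antipode (R := k)) z)
          = TensorProduct.map ψ Sinv z := by
        intro z
        induction z using TensorProduct.induction_on with
        | zero => simp
        | tmul w' x' => simp [hSinv1]
        | add p q hp hq => simp [map_add, hp, hq]
      exact this (ρV v)
    rw [step1, hψ]
    have hco : LinearMap.rTensor H ρV (ρV v)
        = (TensorProduct.assoc k V H H).symm
            (LinearMap.lTensor V Coalgebra.comul (ρV v)) := by
      have hco0 := hcoassocV v
      have e1 : (TensorProduct.map ρV LinearMap.id) (ρV v)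
          = LinearMap.rTensor H ρV (ρV v) := rfl
      have e2 : (TensorProduct.map LinearMap.id Coalgebra.comul) (ρV v)
          = LinearMap.lTensor V Coalgebra.comul (ρV v) := rfl
      rw [e1, e2] at hco0
      exact hco0
    have e0 : ∀ z : V ⊗[k] H, TensorProduct.map
        (TensorProduct.lift actV ∘ₗ LinearMap.lTensor V (Sinv ∘ₗ Sinv) ∘ₗ ρV) Sinv z
        = TensorProduct.map
          (TensorProduct.lift actV ∘ₗ LinearMap.lTensor V (Sinv ∘ₗ Sinv)) Sinv
          (LinearMap.rTensor H ρV z) := by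
      intro z
      induction z using TensorProduct.induction_on with
      | zero => simp
      | tmul w' x' => simp
      | add p q hp hq => simp [map_add, hp, hq]
    rw [e0, hco]
    have q2map : (LinearMap.mul' k H
          ∘ₗ TensorProduct.map (Sinv ∘ₗ Sinv) Sinv) ∘ₗ Coalgebra.comul
        = (Algebra.linearMap k H) ∘ₗ (Coalgebra.counit (R := k) (A := H)) := by
      apply LinearMap.ext
      intro x'
      simpa using q2_elem x'
    rw [keyC2, ← LinearMap.lTensor_comp_apply, q2map, keyD, hcounitV]
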